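/- For every real r > 0, every natural number n, and every real x, the two recurrences ω_{n+1,r}(x) = r((x+1)·ω_{n,r+1}(x) − ω_{n,r}(x)) and ω_{n+1,r}(x) = (x² + x)·ω_{n,r}'(x) + r·x·ω_{n,r}(x) hold, where ω_{n,r}' denotes the derivative with respect to x. In particular, for r = 1, ω_{n+1}(x) = (x² + x)·ω_n'(x) + x·ω_n(x). -/

import Mathlib

open Finset MeasureTheory Real

/-- Stirling numbers of the second kind. -/
def stirling2 : ℕ → ℕ → ℕ
  | 0, 0 => 1
  | 0, _ + 1 => 0
  | _ + 1, 0 => 0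
  | n + 1, k + 1 => (k + 1) * stirling2 n (k + 1) + stirling2 n k

/-- The generalized geometric polynomials `ω_{n,r}(x) = Σ_{k=0}^n S(n,k) (r)_k x^k`,
where `(r)_k` is the rising factorial (Pochhammer symbol). -/
noncomputable def geomPoly (n : ℕ) (r x : ℝ) : ℝ :=
  ∑ k ∈ Finset.range (n + 1), (stirling2 n k : ℝ) * (ascPochhammer ℝ k).eval r * x ^ k

/-- The exponential polynomials `φ_n(x) = Σ_{k=0}^n S(n,k) x^k`. -/
noncomputable def expPoly (n : ℕ) (x : ℝ) : ℝ :=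
  ∑ k ∈ Finset.range (n + 1), (stirling2 n k : ℝ) * x ^ k

lemma stirling2_of_lt : ∀ n k, n < k → stirling2 n k = 0 := by
  intro n
  induction n with
  | zero =>
    intro k h
    match k, h with
    | k + 1, _ => rfl
  | succ n ih =>
    intro k h
    match k, h with
    | k + 1, h =>
      have h' : n < k := Nat.lt_of_succ_lt_succ h
      simp [stirling2, ih _ h', ih _ (h'.trans (Nat.lt_succ_self k))]

lemma asc_succ_left (k : ℕ) (r : ℝ) :
    (ascPochhammer ℝ (k + 1)).eval r = r * (ascPochhammer ℝ k).eval (r + 1) := by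
  rw [ascPochhammer_succ_left]
  simp [Polynomial.eval_comp]

lemma geomPoly_succ_eq (n : ℕ) (r x : ℝ) :
    geomPoly (n + 1) r x = ∑ k ∈ Finset.range (n + 1), (stirling2 n k : ℝ) *
      ((k : ℝ) * (ascPochhammer ℝ k).eval r * x ^ k
        + (ascPochhammer ℝ (k + 1)).eval r * x ^ (k + 1)) := by
  set g : ℕ → ℝ := fun k =>
    (k : ℝ) * (stirling2 n k : ℝ) * (ascPochhammer ℝ k).eval r * x ^ k with hg
  have hkey : ∑ k ∈ Finset.range (n + 1), g (k + 1) = ∑ k ∈ Finset.range (n + 1), g k := by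
    have h1 := Finset.sum_range_succ' g (n + 1)
    have h2 := Finset.sum_range_succ g (n + 1)
    have hg0 : g 0 = 0 := by simp [hg]
    have hgn : g (n + 1) = 0 := by
      simp [hg, stirling2_of_lt n (n + 1) (Nat.lt_succ_self n)]
    rw [hg0, add_zero] at h1
    rw [hgn, add_zero] at h2
    rw [← h1, h2]
  unfold geomPoly
  rw [Finset.sum_range_succ']
  have h0 : (stirling2 (n + 1) 0 : ℝ) * (ascPochhammer ℝ 0).eval r * x ^ 0 = 0 := by
    simp [stirling2]
  rw [h0, add_zero]
  have hsplit : ∀ k ∈ Finset.range (n + 1),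
      (stirling2 (n + 1) (k + 1) : ℝ) * (ascPochhammer ℝ (k + 1)).eval r * x ^ (k + 1)
      = g (k + 1) + (stirling2 n k : ℝ) * (ascPochhammer ℝ (k + 1)).eval r * x ^ (k + 1) := by
    intro k _
    show ((((k + 1) * stirling2 n (k + 1) + stirling2 n k : ℕ)) : ℝ) * _ * _ = _
    simp only [hg]
    push_cast
    ring
  rw [Finset.sum_congr rfl hsplit, Finset.sum_add_distrib, hkey, ← Finset.sum_add_distrib]
  apply Finset.sum_congr rfl
  intro k _
  simp only [hg]
  ring

lemma geomPoly_hasDerivAt (n : ℕ) (r x : ℝ) :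
    HasDerivAt (geomPoly n r)
      (∑ k ∈ Finset.range (n + 1),
        (stirling2 n k : ℝ) * (ascPochhammer ℝ k).eval r * ((k : ℝ) * x ^ (k - 1))) x := by
  have : HasDerivAt (fun y : ℝ => ∑ k ∈ Finset.range (n + 1),
      (stirling2 n k : ℝ) * (ascPochhammer ℝ k).eval r * y ^ k)
      (∑ k ∈ Finset.range (n + 1),
        (stirling2 n k : ℝ) * (ascPochhammer ℝ k).eval r * ((k : ℝ) * x ^ (k - 1))) x := by
    apply HasDerivAt.fun_sum
    intro k _
    exact (hasDerivAt_pow k x).const_mul _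
  exact this

lemma geomPoly_deriv_rec (r : ℝ) (n : ℕ) (x : ℝ) :
    geomPoly (n + 1) r x =
      (x ^ 2 + x) * deriv (geomPoly n r) x + r * x * geomPoly n r x := by
  rw [(geomPoly_hasDerivAt n r x).deriv, geomPoly_succ_eq]
  unfold geomPoly
  rw [Finset.mul_sum, Finset.mul_sum, ← Finset.sum_add_distrib]
  apply Finset.sum_congr rfl
  intro k _
  rw [ascPochhammer_succ_eval]
  rcases k with _ | m
  · simp [mul_comm]
  · have hx : x ^ (m + 1 - 1) = x ^ m := rfl
    rw [hx]
    push_cast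
    ring

/-- For real `r > 0` and natural `n`, the recurrences
`ω_{n+1,r}(x) = r((x+1) ω_{n,r+1}(x) − ω_{n,r}(x))` and
`ω_{n+1,r}(x) = (x² + x) ω_{n,r}'(x) + r x ω_{n,r}(x)` hold for all real `x`;
in particular, for `r = 1`, `ω_{n+1}(x) = (x² + x) ω_n'(x) + x ω_n(x)`. -/
theorem geomPoly_recurrences (r : ℝ) (hr : 0 < r) (n : ℕ) :
    (∀ x : ℝ, geomPoly (n + 1) r x = r * ((x + 1) * geomPoly n (r + 1) x - geomPoly n r x)) ∧
    (∀ x : ℝ, geomPoly (n + 1) r x =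
      (x ^ 2 + x) * deriv (geomPoly n r) x + r * x * geomPoly n r x) ∧
    (∀ x : ℝ, geomPoly (n + 1) 1 x =
      (x ^ 2 + x) * deriv (geomPoly n 1) x + x * geomPoly n 1 x) := by
  refine ⟨fun x => ?_, fun x => geomPoly_deriv_rec r n x, fun x => ?_⟩
  · rw [geomPoly_succ_eq]
    unfold geomPoly
    rw [Finset.mul_sum, ← Finset.sum_sub_distrib, Finset.mul_sum]
    apply Finset.sum_congr rfl
    intro k _
    rw [asc_succ_left]
    have hrel : r * (ascPochhammer ℝ k).eval (r + 1)
        = (ascPochhammer ℝ k).eval r * (r + k) := by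
      rw [← asc_succ_left, ascPochhammer_succ_eval]
    linear_combination (-(stirling2 n k : ℝ) * x ^ k) * hrel
  · rw [geomPoly_deriv_rec 1 n x, one_mul]
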